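/- Let G be a chain graph, H its canonical LWF DAH, and p a probability mass function on ∏_{v∈V} X_v. Then p is global G-Markovian if and only if p is global H-Markovian. -/

import Mathlib

namespace BH

variable {V : Type*}

/-- The edge set of a directed hypergraph on vertex set `V`:
each hyperedge is an ordered pair `(tail, head)` of subsets of `V`. -/
abbrev HEdges (V : Type*) := Set (Set V × Set V)

/-- Every hyperedge has disjoint tail and head. -/
def HDisjoint (E : HEdges V) : Prop := ∀ h ∈ E, Disjoint h.1 h.2

/-- `u` is a parent of `v` in the directed hypergraph. -/
def hPar (E : HEdges V) (u v : V) : Prop := ∃ h ∈ E, u ∈ h.1 ∧ v ∈ h.2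

/-- `u` and `v` are neighbors (co-head) in the directed hypergraph. -/
def hNbr (E : HEdges V) (u v : V) : Prop := ∃ h ∈ E, u ∈ h.2 ∧ v ∈ h.2 ∧ u ≠ v

/-- A partially directed cycle with respect to a neighbor relation `nbr` and a
parent relation `par`: a cyclic sequence `v_1, …, v_k, v_{k+1} = v_1` in which every
step is a neighbor-or-parent step and at least one step is a parent step. -/
def PDCycle (nbr par : V → V → Prop) : Prop :=
  ∃ (n : ℕ) (f : ZMod (n + 1) → V),
    (∀ i, nbr (f i) (f (i + 1)) ∨ par (f i) (f (i + 1))) ∧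
    (∃ i, par (f i) (f (i + 1)))

/-- A directed hypergraph is acyclic if it has no partially directed cycle. -/
def HAcyclic (E : HEdges V) : Prop := ¬ PDCycle (hNbr E) (hPar E)

/-- Graph notions: a graph on `V` is a set of ordered pairs.
`u` is a parent of `v` if `(u,v)` is a directed edge. -/
def gPar (E : Set (V × V)) (u v : V) : Prop := (u, v) ∈ E ∧ (v, u) ∉ E

/-- `u` and `v` are neighbors if `(u,v)` is an undirected edge. -/
def gNbr (E : Set (V × V)) (u v : V) : Prop := (u, v) ∈ E ∧ (v, u) ∈ E

/-- A chain graph is a graph with no partially directed cycle. -/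
def IsChainGraph (E : Set (V × V)) : Prop := ¬ PDCycle (gNbr E) (gPar E)

/-- The shadow of a directed hypergraph: for every hyperedge `(X,Y)`, any two
distinct vertices of `Y` are joined by an undirected edge and there is a directed
edge from every vertex of `X` to every vertex of `Y`. -/
def shadow (E : HEdges V) : Set (V × V) :=
  {p | ∃ h ∈ E, (p.1 ∈ h.2 ∧ p.2 ∈ h.2 ∧ p.1 ≠ p.2) ∨ (p.1 ∈ h.1 ∧ p.2 ∈ h.2)}

/-- Chain component of `v` in a directed hypergraph: reflexive-transitive closure
of the co-head relation. -/
def hComp (E : HEdges V) (v : V) : Set V := {u | Relation.ReflTransGen (hNbr E) v u}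

/-- The set of chain components of a directed hypergraph. -/
def hComps (E : HEdges V) : Set (Set V) := {S | ∃ v, S = hComp E v}

/-- Chain component of `v` in a graph: vertices joined to `v` by undirected paths. -/
def gComp (E : Set (V × V)) (v : V) : Set V := {u | Relation.ReflTransGen (gNbr E) v u}

/-- The set of chain components of a graph. -/
def gComps (E : Set (V × V)) : Set (Set V) := {S | ∃ v, S = gComp E v}

/-- Parent set of a vertex in a hypergraph. -/
def hPaSet (E : HEdges V) (v : V) : Set V := {u | hPar E u v}

/-- Neighbor set of a vertex in a hypergraph. -/
def hNbSet (E : HEdges V) (v : V) : Set V := {u | hNbr E u v}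

/-- Parent set of a vertex in a graph. -/
def gPaSet (E : Set (V × V)) (v : V) : Set V := {u | gPar E u v}

/-- Neighbor set of a vertex in a graph. -/
def gNbSet (E : Set (V × V)) (v : V) : Set V := {u | gNbr E u v}

/-- `pa(τ)` for a vertex set `τ` in a graph. -/
def gPaTau (E : Set (V × V)) (τ : Set V) : Set V := (⋃ v ∈ τ, gPaSet E v) \ τ

/-- `bd(τ)` for a vertex set `τ` in a graph. -/
def gBd (E : Set (V × V)) (τ : Set V) : Set V := (⋃ v ∈ τ, gPaSet E v ∪ gNbSet E v) \ τ

/-- `cl(τ) = bd(τ) ∪ τ`. -/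
def gCl (E : Set (V × V)) (τ : Set V) : Set V := gBd E τ ∪ τ

/-- `pa(τ)` for a vertex set `τ` in a hypergraph. -/
def hPaTau (E : HEdges V) (τ : Set V) : Set V := (⋃ v ∈ τ, hPaSet E v) \ τ

/-- Induced subgraph on a vertex set. -/
def gInduced (E : Set (V × V)) (A : Set V) : Set (V × V) := {p ∈ E | p.1 ∈ A ∧ p.2 ∈ A}

/-- Induced sub-hypergraph on a vertex set. -/
def hInduced (E : HEdges V) (A : Set V) : HEdges V := {h ∈ E | h.1 ∪ h.2 ⊆ A}

/-- Anterior set of `S` with respect to neighbor/parent relations: all vertices with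
a neighbor-or-parent-step path to some vertex of `S` (including `S` itself). -/
def antOf (nbr par : V → V → Prop) (S : Set V) : Set V :=
  {w | ∃ s ∈ S, Relation.ReflTransGen (fun a b => nbr a b ∨ par a b) w s}

/-- Anterior set in a graph. -/
def gAnt (E : Set (V × V)) (S : Set V) : Set V := antOf (gNbr E) (gPar E) S

/-- Anterior set in a hypergraph. -/
def hAnt (E : HEdges V) (S : Set V) : Set V := antOf (hNbr E) (hPar E) S

/-- The moral graph of a graph: its underlying undirected graph with all pairs of
distinct vertices inside `bd(τ)` joined, for every chain component `τ`. -/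
def moral (E : Set (V × V)) : Set (V × V) :=
  {p | (p.1, p.2) ∈ E ∨ (p.2, p.1) ∈ E ∨
    ∃ τ ∈ gComps E, p.1 ∈ gBd E τ ∧ p.2 ∈ gBd E τ ∧ p.1 ≠ p.2}

/-- `K` is a clique with respect to the (symmetric) pair set `U`. -/
def IsCliqueIn (U : Set (V × V)) (K : Set V) : Prop :=
  ∀ u ∈ K, ∀ v ∈ K, u ≠ v → (u, v) ∈ U

/-- `K` is a maximal clique of `U` inside the vertex set `S`. -/
def IsMaxCliqueWithin (U : Set (V × V)) (S K : Set V) : Prop :=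
  K.Nonempty ∧ K ⊆ S ∧ IsCliqueIn U K ∧
    ∀ K', K ⊆ K' → K' ⊆ S → IsCliqueIn U K' → K' = K

/-- The maximal cliques of the pair set `U`. -/
def maxCliques (U : Set (V × V)) : Set (Set V) :=
  {K | IsMaxCliqueWithin U Set.univ K}

/-- The undirected part of a graph, as a set of pairs. -/
def uPart (E : Set (V × V)) : Set (V × V) := {p | gNbr E p.1 p.2}

/-- The set of children of a vertex in a graph. -/
def children (E : Set (V × V)) (v : V) : Set V := {w | gPar E v w}

/-- Phase I, first stage of the canonical LWF DAH construction: for each vertex `v`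
with children set `S_v`, the hyperedge `({v}, K)` for every maximal clique `K` of the
undirected part of `G[S_v]`. -/
def phase1a (E : Set (V × V)) : HEdges V :=
  {h | ∃ v K, IsMaxCliqueWithin (uPart E) (children E v) K ∧ h = ({v}, K)}

/-- Phase I of the canonical LWF DAH construction. -/
def phase1 (E : Set (V × V)) : HEdges V :=
  phase1a E ∪
    {h | ∃ K, IsMaxCliqueWithin (uPart E) Set.univ K ∧
      (∀ h' ∈ phase1a E, ¬ K ⊆ h'.2) ∧ h = (∅, K)}

/-- The Phase-I hyperedges lying inside `cl(τ)` whose head meets `τ`. -/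
def HstarI (E : Set (V × V)) (τ : Set V) : HEdges V :=
  {h ∈ phase1 E | h.1 ∪ h.2 ⊆ gCl E τ ∧ (h.2 ∩ τ).Nonempty}

/-- The canonical LWF DAH of a chain graph (its set of hyperedges): for every chain
component `τ` and every nonempty family `F ⊆ H*_τ` with `B = ⋂_{h ∈ F} H(h)`, the
hyperedge `(⋃ {T(h) : h ∈ H*_τ, B ⊆ H(h)}, B)`. -/
def canonicalLWF (E : Set (V × V)) : HEdges V :=
  {e | ∃ τ ∈ gComps E, ∃ F, F ⊆ HstarI E τ ∧ F.Nonempty ∧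
    e.2 = {x | ∀ g ∈ F, x ∈ g.2} ∧
    e.1 = {x | ∃ h ∈ HstarI E τ, e.2 ⊆ h.2 ∧ x ∈ h.1}}

/-- The hyperedges of `H[τ ∪ pa(τ)]` whose head is contained in `τ`. -/
def HstarF (E : HEdges V) (τ : Set V) : HEdges V :=
  {h ∈ hInduced E (τ ∪ hPaTau E τ) | h.2 ⊆ τ}

/-- The hyperedges of a family whose underlying vertex sets are maximal under
set containment. -/
def maximalIn (E : HEdges V) : HEdges V :=
  {h ∈ E | ∀ h' ∈ E, h.1 ∪ h.2 ⊆ h'.1 ∪ h'.2 → h'.1 ∪ h'.2 = h.1 ∪ h.2}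

/-- Descendants of `v` with respect to a parent relation. -/
def desc (par : V → V → Prop) (v : V) : Set V := {u | Relation.TransGen par v u}

/-- Non-descendants of `v`. -/
def ndOf (par : V → V → Prop) (v : V) : Set V := {u | u ∉ desc par v}

/-- Adjacency with respect to neighbor/parent relations. -/
def adjOf (nbr par : V → V → Prop) (u v : V) : Prop := par u v ∨ par v u ∨ nbr u v

/-- Boundary of a vertex. -/
def bdOf (nbr par : V → V → Prop) (v : V) : Set V := {u | par u v} ∪ {u | nbr u v}

/-- Closure of a vertex. -/
def clOf (nbr par : V → V → Prop) (v : V) : Set V := bdOf nbr par v ∪ {v}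

/-- `C` separates `A` and `B` in the undirected graph with pair set `U`:
every path from `A` to `B` meets `C`. -/
def Separates (U : Set (V × V)) (A B C : Set V) : Prop :=
  ∀ (n : ℕ) (f : Fin (n + 1) → V), f 0 ∈ A → f (Fin.last n) ∈ B →
    (∀ i : Fin n, (f i.castSucc, f i.succ) ∈ U) → ∃ i, f i ∈ C

section Prob

variable [Fintype V] [DecidableEq V] {X : V → Type*} [∀ v, Fintype (X v)]

/-- `p` is a probability mass function. -/
def IsPMF (p : (∀ v, X v) → ℝ) : Prop := (∀ x, 0 ≤ p x) ∧ ∑ x, p x = 1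

/-- Marginal of `p` on the coordinates in `S`, evaluated at `x`. -/
noncomputable def marginal (p : (∀ v, X v) → ℝ) (S : Set V) (x : ∀ v, X v) : ℝ :=
  ∑ y, Set.indicator {z : ∀ v, X v | ∀ v ∈ S, z v = x v} p y

/-- Conditional independence `A ⟂ B | C` for the pmf `p`. -/
def CI (p : (∀ v, X v) → ℝ) (A B C : Set V) : Prop :=
  ∀ x, marginal p (A ∪ B ∪ C) x * marginal p C x
      = marginal p (A ∪ C) x * marginal p (B ∪ C) x

/-- The intersection property (S5). -/
def S5 (p : (∀ v, X v) → ℝ) : Prop :=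
  ∀ A B C D : Set V, Disjoint A B → Disjoint A C → Disjoint A D →
    Disjoint B C → Disjoint B D → Disjoint C D →
    CI p A B (D ∪ C) → CI p A D (B ∪ C) → CI p A (B ∪ D) C

/-- Pairwise Markov property with respect to neighbor/parent relations. -/
def PairwiseMarkov (nbr par : V → V → Prop) (p : (∀ v, X v) → ℝ) : Prop :=
  ∀ v u, v ≠ u → ¬ adjOf nbr par v u → u ∈ ndOf par v →
    CI p {v} {u} (ndOf par v \ {v, u})

/-- Local Markov property with respect to neighbor/parent relations. -/
def LocalMarkov (nbr par : V → V → Prop) (p : (∀ v, X v) → ℝ) : Prop :=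
  ∀ v, CI p {v} (ndOf par v \ clOf nbr par v) (bdOf nbr par v)

/-- Global Markov property relative to a chain graph. -/
def GlobalMarkovG (E : Set (V × V)) (p : (∀ v, X v) → ℝ) : Prop :=
  ∀ A B C : Set V, Disjoint A B → Disjoint A C → Disjoint B C →
    Separates (moral (gInduced E (gAnt E (A ∪ B ∪ C)))) A B C → CI p A B C

/-- Global Markov property relative to a directed hypergraph. -/
def GlobalMarkovH (E : HEdges V) (p : (∀ v, X v) → ℝ) : Prop :=
  ∀ A B C : Set V, Disjoint A B → Disjoint A C → Disjoint B C →
    Separates (moral (shadow (hInduced E (hAnt E (A ∪ B ∪ C))))) A B C → CI p A B C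

/-- `f` depends only on the coordinates in `S`. -/
def DependsOn (f : (∀ v, X v) → ℝ) (S : Set V) : Prop :=
  ∀ x y, (∀ v ∈ S, x v = y v) → f x = f y

/-- Conditional pmf `p(x_S | x_T)` as a ratio of marginals. -/
noncomputable def condM (p : (∀ v, X v) → ℝ) (S T : Set V) (x : ∀ v, X v) : ℝ :=
  marginal p (S ∪ T) x / marginal p T x

/-- Sum of `F` over the coordinates in `τ`, the remaining coordinates fixed at `x`. -/
noncomputable def sumOver (τ : Set V) (F : (∀ v, X v) → ℝ) (x : ∀ v, X v) : ℝ :=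
  ∑ y, Set.indicator {z : ∀ v, X v | ∀ v, v ∉ τ → z v = x v} F y

/-- Factorization (CF) of a pmf according to a chain graph. -/
def FactorizesCG (E : Set (V × V)) (p : (∀ v, X v) → ℝ) : Prop :=
  (∀ x, p x = ∏ᶠ τ ∈ gComps E, condM p τ (gPaTau E τ) x) ∧
  ∀ τ ∈ gComps E, ∃ ψ : Set V → (∀ v, X v) → ℝ,
    (∀ K ∈ maxCliques (moral (gInduced E (τ ∪ gPaTau E τ))),
      (∀ x, 0 ≤ ψ K x) ∧ DependsOn (ψ K) K) ∧
    ∀ x, condM p τ (gPaTau E τ) x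
      = (∏ᶠ K ∈ maxCliques (moral (gInduced E (τ ∪ gPaTau E τ))), ψ K x) /
        sumOver τ (fun y => ∏ᶠ K ∈ maxCliques (moral (gInduced E (τ ∪ gPaTau E τ))), ψ K y) x

/-- Factorization (HF) of a pmf according to a directed acyclic hypergraph. -/
def FactorizesBH (E : HEdges V) (p : (∀ v, X v) → ℝ) : Prop :=
  (∀ x, p x = ∏ᶠ τ ∈ hComps E, condM p τ (hPaTau E τ) x) ∧
  ∀ τ ∈ hComps E, ∃ ψ : Set V × Set V → (∀ v, X v) → ℝ,
    (∀ h ∈ maximalIn (HstarF E τ), (∀ x, 0 ≤ ψ h x) ∧ DependsOn (ψ h) (h.1 ∪ h.2)) ∧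
    (∀ x, condM p τ (hPaTau E τ) x = ∏ᶠ h ∈ maximalIn (HstarF E τ), ψ h x) ∧
    (∀ x, sumOver τ (fun y => ∏ᶠ h ∈ maximalIn (HstarF E τ), ψ h y) x = 1)

/-- Factorization of a pmf according to a chain graph with intervened set `A`. -/
def FactorizesCGInt (E : Set (V × V)) (A : Set V) (f : (∀ v, X v) → ℝ) : Prop :=
  (∀ x, f x = ∏ᶠ τ ∈ gComps E, condM f (τ \ A) (gPaTau E τ ∪ (τ ∩ A)) x) ∧
  ∀ τ ∈ gComps E, ∃ ψ : Set V → (∀ v, X v) → ℝ,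
    (∀ K ∈ maxCliques (moral (gInduced E (τ ∪ gPaTau E τ))),
      (∀ x, 0 ≤ ψ K x) ∧ DependsOn (ψ K) K) ∧
    ∀ x, condM f (τ \ A) (gPaTau E τ ∪ (τ ∩ A)) x
      = (∏ᶠ K ∈ maxCliques (moral (gInduced E (τ ∪ gPaTau E τ))), ψ K x) /
        sumOver (τ \ A)
          (fun y => ∏ᶠ K ∈ maxCliques (moral (gInduced E (τ ∪ gPaTau E τ))), ψ K y) x

/-- Factorization of a pmf according to a directed acyclic hypergraph with
intervened set `A`. -/
def FactorizesBHInt (E : HEdges V) (A : Set V) (f : (∀ v, X v) → ℝ) : Prop :=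
  (∀ x, f x = ∏ᶠ τ ∈ hComps E, condM f (τ \ A) (hPaTau E τ ∪ (τ ∩ A)) x) ∧
  ∀ τ ∈ hComps E, ∃ ψ : Set V × Set V → (∀ v, X v) → ℝ,
    (∀ h ∈ maximalIn (HstarF E τ), (∀ x, 0 ≤ ψ h x) ∧ DependsOn (ψ h) (h.1 ∪ h.2)) ∧
    ∀ x, condM f (τ \ A) (hPaTau E τ ∪ (τ ∩ A)) x
      = (∏ᶠ h ∈ maximalIn (HstarF E τ), ψ h x) /
        sumOver (τ \ A) (fun y => ∏ᶠ h ∈ maximalIn (HstarF E τ), ψ h y) x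

/-- `f` is supported on configurations consistent with the intervention `x_A = a₀`. -/
def ConsistentWith (f : (∀ v, X v) → ℝ) (A : Set V) (a0 : ∀ v, X v) : Prop :=
  ∀ x, f x ≠ 0 → ∀ v ∈ A, x v = a0 v

end Prob

end BH


namespace BH

section Aux
variable {V : Type*}

lemma rtg_mono_offdiag {r r' : V → V → Prop} (h : ∀ a b, a ≠ b → r a b → r' a b)
    {a b : V} (hab : Relation.ReflTransGen r a b) : Relation.ReflTransGen r' a b := by
  induction hab with
  | refl => exact .refl
  | tail _ hcd ih =>
    rename_i c d _
    by_cases hcd' : c = d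
    · exact hcd' ▸ ih
    · exact ih.tail (h _ _ hcd' hcd)

lemma rtg_congr_offdiag {r r' : V → V → Prop} (h : ∀ a b, a ≠ b → (r a b ↔ r' a b)) {a b : V} :
    Relation.ReflTransGen r a b ↔ Relation.ReflTransGen r' a b :=
  ⟨rtg_mono_offdiag (fun a b hne hr => (h a b hne).1 hr),
   rtg_mono_offdiag (fun a b hne hr => (h a b hne).2 hr)⟩

lemma exists_fin_path {r : V → V → Prop} {a b : V} (h : Relation.ReflTransGen r a b) :
    ∃ n, ∃ g : Fin (n+1) → V, g 0 = a ∧ g (Fin.last n) = b ∧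
      ∀ i : Fin n, r (g i.castSucc) (g i.succ) := by
  induction h with
  | refl => exact ⟨0, fun _ => a, rfl, rfl, fun i => i.elim0⟩
  | tail _ hcd ih =>
    obtain ⟨n, g, h0, hl, hs⟩ := ih
    rename_i c d _
    refine ⟨n+1, Fin.snoc g d, ?_, ?_, ?_⟩
    · rw [show (0 : Fin (n+2)) = Fin.castSucc 0 from rfl, Fin.snoc_castSucc]; exact h0
    · simp [Fin.snoc_last]
    · intro i
      refine Fin.lastCases ?_ ?_ i
      · rw [Fin.succ_last, Fin.snoc_last, Fin.snoc_castSucc, hl]; exact hcd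
      · intro j
        rw [Fin.succ_castSucc, Fin.snoc_castSucc, Fin.snoc_castSucc]
        exact hs j

lemma not_rtg_nbr_of_par {E : Set (V × V)} (hG : IsChainGraph E) {a b : V}
    (hab : gPar E a b) : ¬ Relation.ReflTransGen (gNbr E) b a := by
  intro h
  apply hG
  have hne : a ≠ b := by rintro rfl; exact hab.2 hab.1
  obtain ⟨n, g, h0, hl, hs⟩ := exists_fin_path h
  cases n with
  | zero => exact absurd (show a = b by rw [← hl, ← h0]; rfl) hne
  | succ m =>
    haveI : Fact (1 < m + 2) := ⟨by omega⟩
    have hone : (1 : ZMod (m+2)).val = 1 := ZMod.val_one _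
    have hval : ∀ i : ZMod (m+2), (i+1).val = (i.val + 1) % (m+2) := by
      intro i
      rw [ZMod.val_add, hone]
    refine ⟨m+1, fun i : ZMod (m+2) => g ⟨i.val, ZMod.val_lt i⟩, ?_, ?_⟩
    · intro i
      have hiv : i.val < m + 2 := ZMod.val_lt i
      rcases Nat.lt_or_ge i.val (m+1) with hlt | hge
      · left
        have h1 : (i+1).val = i.val + 1 := by
          rw [hval i, Nat.mod_eq_of_lt (by omega)]
        have := hs ⟨i.val, hlt⟩
        simpa [h1, Fin.castSucc, Fin.succ, Fin.castAdd, Fin.castLE] using this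
      · right
        have hieq : i.val = m + 1 := by omega
        have h1 : (i+1).val = 0 := by rw [hval i, hieq]; simp
        have e1 : g ⟨i.val, hiv⟩ = a := by
          rw [← hl]; congr 1; exact Fin.ext hieq
        have e2 : g ⟨(i+1).val, ZMod.val_lt _⟩ = b := by
          rw [← h0]; congr 1; exact Fin.ext h1
        show gPar E (g ⟨i.val, hiv⟩) (g ⟨(i+1).val, ZMod.val_lt _⟩)
        rw [e1, e2]; exact hab
    · refine ⟨((m+1 : ℕ) : ZMod (m+2)), ?_⟩
      have hiv : ((m+1 : ℕ) : ZMod (m+2)).val = m + 1 := by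
        rw [ZMod.val_natCast]; exact Nat.mod_eq_of_lt (by omega)
      have h1 : (((m+1 : ℕ) : ZMod (m+2)) + 1).val = 0 := by
        rw [hval, hiv]; simp
      have e1 : g ⟨((m+1 : ℕ) : ZMod (m+2)).val, ZMod.val_lt _⟩ = a := by
        rw [← hl]; congr 1; exact Fin.ext hiv
      have e2 : g ⟨(((m+1 : ℕ) : ZMod (m+2)) + 1).val, ZMod.val_lt _⟩ = b := by
        rw [← h0]; congr 1; exact Fin.ext h1
      show gPar E (g ⟨((m+1 : ℕ) : ZMod (m+2)).val, ZMod.val_lt _⟩)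
        (g ⟨(((m+1 : ℕ) : ZMod (m+2)) + 1).val, ZMod.val_lt _⟩)
      rw [e1, e2]; exact hab

lemma exists_maxclique [Fintype V] {U : Set (V × V)} {S K0 : Set V} (hK0S : K0 ⊆ S)
    (hcl : IsCliqueIn U K0) (hne : K0.Nonempty) :
    ∃ K, IsMaxCliqueWithin U S K ∧ K0 ⊆ K := by
  have hfin : {K : Set V | K0 ⊆ K ∧ K ⊆ S ∧ IsCliqueIn U K}.Finite := Set.toFinite _
  have hne' : {K : Set V | K0 ⊆ K ∧ K ⊆ S ∧ IsCliqueIn U K}.Nonempty :=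
    ⟨K0, le_refl _, hK0S, hcl⟩
  obtain ⟨K, hK, hmax⟩ := Set.Finite.exists_maximalFor id _ hfin hne'
  exact ⟨K, ⟨hne.mono hK.1, hK.2.1, hK.2.2,
    fun K' h1 h2 h3 => le_antisymm (hmax ⟨hK.1.trans h1, h2, h3⟩ h1) h1⟩, hK.1⟩


section Canon
variable {E : Set (V × V)}

lemma gNbr_symm {u v : V} (h : gNbr E u v) : gNbr E v u := ⟨h.2, h.1⟩

lemma gPar_ne {u v : V} (h : gPar E u v) : u ≠ v := by rintro rfl; exact h.2 h.1

lemma clique_mono {U : Set (V × V)} {K K' : Set V} (h : K ⊆ K')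
    (hc : IsCliqueIn U K') : IsCliqueIn U K :=
  fun a ha b hb hne => hc a (h ha) b (h hb) hne

lemma phase1_head_clique {h : Set V × Set V} (hh : h ∈ phase1 E) :
    IsCliqueIn (uPart E) h.2 := by
  rcases hh with ⟨v, K, hK, rfl⟩ | ⟨K, hK, _, rfl⟩
  · exact hK.2.2.1
  · exact hK.2.2.1

lemma phase1_tail {h : Set V × Set V} (hh : h ∈ phase1 E) :
    h.1 = ∅ ∨ ∃ v, h.1 = {v} ∧ h.2 ⊆ children E v := by
  rcases hh with ⟨v, K, hK, rfl⟩ | ⟨K, _, _, rfl⟩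
  · exact Or.inr ⟨v, rfl, hK.2.1⟩
  · exact Or.inl rfl

lemma canonical_spec {e : Set V × Set V} (he : e ∈ canonicalLWF E) :
    (∀ u ∈ e.1, ∀ v ∈ e.2, gPar E u v) ∧ IsCliqueIn (uPart E) e.2 := by
  obtain ⟨τ, hτ, F, hFsub, ⟨g0, hg0⟩, h2, h1⟩ := he
  constructor
  · intro u hu v hv
    rw [h1] at hu
    obtain ⟨h', hh', hsub, hu⟩ := hu
    rcases phase1_tail hh'.1 with h0 | ⟨w, hw, hch⟩
    · rw [h0] at hu; exact absurd hu (Set.notMem_empty u)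
    · rw [hw] at hu
      rcases hu with rfl
      exact hch (hsub hv)
  · have hsub : e.2 ⊆ g0.2 := by rw [h2]; intro x hx; exact hx g0 hg0
    exact clique_mono hsub (phase1_head_clique (hFsub hg0).1)

lemma canonical_disjoint {e : Set V × Set V} (he : e ∈ canonicalLWF E) :
    ∀ x, x ∈ e.1 → x ∉ e.2 := by
  intro x hx1 hx2
  exact gPar_ne ((canonical_spec he).1 x hx1 x hx2) rfl

lemma hPar_canon {u v : V} (h : hPar (canonicalLWF E) u v) : gPar E u v := by
  obtain ⟨e, he, hu, hv⟩ := h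
  exact (canonical_spec he).1 u hu v hv

lemma hNbr_canon {u v : V} (h : hNbr (canonicalLWF E) u v) : gNbr E u v := by
  obtain ⟨e, he, hu, hv, hne⟩ := h
  exact (canonical_spec he).2 u hu v hv hne

lemma mem_gCl_self {τ : Set V} {v : V} (hv : v ∈ τ) : v ∈ gCl E τ := Or.inr hv

lemma mem_gCl_of_rel {τ : Set V} {w v : V} (hv : v ∈ τ)
    (hrel : gPar E w v ∨ gNbr E w v) : w ∈ gCl E τ := by
  by_cases hw : w ∈ τ
  · exact Or.inr hw
  · refine Or.inl ⟨?_, hw⟩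
    refine Set.mem_biUnion hv ?_
    rcases hrel with h | h
    · exact Or.inl h
    · exact Or.inr h

lemma mk_canonical {τ : Set V} (hτ : τ ∈ gComps E) {h : Set V × Set V}
    (hh : h ∈ HstarI E τ) :
    ∃ e ∈ canonicalLWF E, e.2 = h.2 ∧ h.1 ⊆ e.1 ∧ e.1 ∪ e.2 ⊆ gCl E τ := by
  refine ⟨({x | ∃ h' ∈ HstarI E τ, h.2 ⊆ h'.2 ∧ x ∈ h'.1}, h.2),
    ⟨τ, hτ, {h}, Set.singleton_subset_iff.2 hh, ⟨h, rfl⟩, ?_, ?_⟩, rfl, ?_, ?_⟩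
  · ext x; simp
  · ext x; simp
  · intro x hx; exact ⟨h, hh, subset_refl _, hx⟩
  · rintro x (⟨h', hh', _, hx⟩ | hx)
    · exact hh'.2.1 (Or.inl hx)
    · exact hh.2.1 (Or.inr hx)

lemma comp_mem {a : V} : (gComp E a) ∈ gComps E := ⟨a, rfl⟩

lemma mem_comp_self {a : V} : a ∈ gComp E a := Relation.ReflTransGen.refl

lemma clique_subset_comp {K : Set V} {a : V} (ha : a ∈ K)
    (hK : IsCliqueIn (uPart E) K) : K ⊆ gComp E a := by
  intro c hc
  by_cases hca : c = a
  · rw [hca]; exact mem_comp_self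
  · exact Relation.ReflTransGen.single (hK a ha c hc (Ne.symm hca))

lemma gNbr_to_edge [Fintype V] {a b : V} (hab : gNbr E a b) (hne : a ≠ b) :
    ∃ e ∈ canonicalLWF E, a ∈ e.2 ∧ b ∈ e.2 ∧ e.1 ∪ e.2 ⊆ gCl E (gComp E a) := by
  have hK0 : IsCliqueIn (uPart E) {a, b} := by
    rintro u (rfl | rfl) v (rfl | rfl) hne'
    · exact absurd rfl hne'
    · exact hab
    · exact gNbr_symm hab
    · exact absurd rfl hne'
  obtain ⟨K, hK, hK0K⟩ := exists_maxclique (Set.subset_univ _) hK0 ⟨a, Or.inl rfl⟩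
  have haK : a ∈ K := hK0K (Or.inl rfl)
  have hbK : b ∈ K := hK0K (Or.inr rfl)
  have hKτ : K ⊆ gComp E a := clique_subset_comp haK hK.2.2.1
  have hKcl : K ⊆ gCl E (gComp E a) := fun c hc => mem_gCl_self (hKτ hc)
  have hedge : ∃ h ∈ HstarI E (gComp E a), h.2 = K := by
    by_cases hex : ∃ h' ∈ phase1a E, K ⊆ h'.2
    · obtain ⟨h', hh', hKh'⟩ := hex
      obtain ⟨w, K', hK', rfl⟩ := hh'
      have hK'K : K' = K := hK.2.2.2 K' hKh' (Set.subset_univ _) hK'.2.2.1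
      refine ⟨({w}, K'), ⟨Or.inl ⟨w, K', hK', rfl⟩, ?_, ?_⟩, hK'K⟩
      · rintro x (rfl | hx)
        · exact mem_gCl_of_rel mem_comp_self (Or.inl (hK'.2.1 (hK'K ▸ haK)))
        · exact hKcl (hK'K ▸ hx)
      · exact ⟨a, hK'K ▸ haK, mem_comp_self⟩
    · refine ⟨(∅, K), ⟨Or.inr ⟨K, hK, fun h' hh' hKh' => hex ⟨h', hh', hKh'⟩, rfl⟩, ?_, ?_⟩, rfl⟩
      · rintro x (hx | hx)
        · exact absurd hx (Set.notMem_empty x)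
        · exact hKcl hx
      · exact ⟨a, haK, mem_comp_self⟩
  obtain ⟨h, hh, hh2⟩ := hedge
  obtain ⟨e, he, he2, _, hecl⟩ := mk_canonical comp_mem hh
  exact ⟨e, he, (he2.trans hh2).symm ▸ haK, (he2.trans hh2).symm ▸ hbK, hecl⟩

lemma gPar_to_edge [Fintype V] {a b : V} (hab : gPar E a b) :
    ∃ e ∈ canonicalLWF E, a ∈ e.1 ∧ b ∈ e.2 ∧ e.1 ∪ e.2 ⊆ gCl E (gComp E b) := by
  have hK0 : IsCliqueIn (uPart E) {b} := by
    rintro u rfl v rfl hne'; exact absurd rfl hne'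
  have hsub : ({b} : Set V) ⊆ children E a := by
    intro x hx
    rw [Set.mem_singleton_iff] at hx
    subst hx
    exact hab
  obtain ⟨K, hK, hbK'⟩ := exists_maxclique hsub hK0 ⟨b, rfl⟩
  have hbK : b ∈ K := hbK' rfl
  have hKτ : K ⊆ gComp E b := clique_subset_comp hbK hK.2.2.1
  have hh : ({a}, K) ∈ HstarI E (gComp E b) := by
    refine ⟨Or.inl ⟨a, K, hK, rfl⟩, ?_, ⟨b, hbK, mem_comp_self⟩⟩
    rintro x (rfl | hx)
    · exact mem_gCl_of_rel mem_comp_self (Or.inl (hK.2.1 hbK))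
    · exact mem_gCl_self (hKτ hx)
  obtain ⟨e, he, he2, he1, hecl⟩ := mk_canonical comp_mem hh
  exact ⟨e, he, he1 rfl, he2.symm ▸ hbK, hecl⟩

end Canon


section Ant
variable {E : Set (V × V)}

lemma gAnt_mem {S : Set V} {s : V} (hs : s ∈ S) : s ∈ gAnt E S :=
  ⟨s, hs, Relation.ReflTransGen.refl⟩

lemma gAnt_closed {S : Set V} {w u : V} (hrel : gNbr E w u ∨ gPar E w u)
    (hu : u ∈ gAnt E S) : w ∈ gAnt E S := by
  obtain ⟨s, hs, hpath⟩ := hu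
  exact ⟨s, hs, Relation.ReflTransGen.head hrel hpath⟩

lemma comp_subset_gAnt {S : Set V} {u : V} (hu : u ∈ gAnt E S) :
    gComp E u ⊆ gAnt E S := by
  intro z hz
  have hsymm : Symmetric (Relation.ReflTransGen (gNbr E)) :=
    by haveI : Std.Symm (gNbr E) := ⟨fun a b h => gNbr_symm h⟩; exact fun x y h => Std.Symm.symm x y h
  have hz' : Relation.ReflTransGen (gNbr E) z u := hsymm hz
  refine Relation.ReflTransGen.head_induction_on hz' hu ?_
  intro a c hac _ hc
  exact gAnt_closed (Or.inl hac) hc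

lemma gCl_comp_subset_gAnt {S : Set V} {u : V} (hu : u ∈ gAnt E S) :
    gCl E (gComp E u) ⊆ gAnt E S := by
  rintro w (⟨hw, -⟩ | hw)
  · obtain ⟨v, hv, hrel⟩ := Set.mem_iUnion₂.1 hw
    have hvA : v ∈ gAnt E S := comp_subset_gAnt hu hv
    rcases hrel with h | h
    · exact gAnt_closed (Or.inr h) hvA
    · exact gAnt_closed (Or.inl h) hvA
  · exact comp_subset_gAnt hu hw

lemma step_iff [Fintype V] {u v : V} (hne : u ≠ v) :
    (gNbr E u v ∨ gPar E u v) ↔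
      (hNbr (canonicalLWF E) u v ∨ hPar (canonicalLWF E) u v) := by
  constructor
  · rintro (h | h)
    · obtain ⟨e, he, ha, hb, -⟩ := gNbr_to_edge h hne
      exact Or.inl ⟨e, he, ha, hb, hne⟩
    · obtain ⟨e, he, ha, hb, -⟩ := gPar_to_edge h
      exact Or.inr ⟨e, he, ha, hb⟩
  · rintro (h | h)
    · exact Or.inl (hNbr_canon h)
    · exact Or.inr (hPar_canon h)

lemma ant_eq [Fintype V] (S : Set V) : gAnt E S = hAnt (canonicalLWF E) S := by
  ext w
  constructor <;> rintro ⟨s, hs, hp⟩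
  · exact ⟨s, hs, rtg_mono_offdiag (fun a b hne h => (step_iff hne).1 h) hp⟩
  · exact ⟨s, hs, rtg_mono_offdiag (fun a b hne h => (step_iff hne).2 h) hp⟩

lemma hNbr_ind {A : Set V} {u v : V}
    (h : hNbr (hInduced (canonicalLWF E) A) u v) : gNbr (gInduced E A) u v := by
  obtain ⟨e, ⟨he, hsub⟩, hu, hv, hne⟩ := h
  have hg : gNbr E u v := hNbr_canon ⟨e, he, hu, hv, hne⟩
  exact ⟨⟨hg.1, hsub (Or.inr hu), hsub (Or.inr hv)⟩,
    ⟨hg.2, hsub (Or.inr hv), hsub (Or.inr hu)⟩⟩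

lemma hPar_ind {A : Set V} {u v : V}
    (h : hPar (hInduced (canonicalLWF E) A) u v) : gPar (gInduced E A) u v := by
  obtain ⟨e, ⟨he, hsub⟩, hu, hv⟩ := h
  have hg : gPar E u v := hPar_canon ⟨e, he, hu, hv⟩
  refine ⟨⟨hg.1, hsub (Or.inl hu), hsub (Or.inr hv)⟩, ?_⟩
  rintro ⟨hvu, -, -⟩
  exact hg.2 hvu

lemma gNbr_ind [Fintype V] {S : Set V} {u v : V} (hne : u ≠ v)
    (h : gNbr (gInduced E (gAnt E S)) u v) :
    hNbr (hInduced (canonicalLWF E) (gAnt E S)) u v := by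
  have hu : u ∈ gAnt E S := h.1.2.1
  have hg : gNbr E u v := ⟨h.1.1, h.2.1⟩
  obtain ⟨e, he, ha, hb, hcl⟩ := gNbr_to_edge hg hne
  exact ⟨e, ⟨he, hcl.trans (gCl_comp_subset_gAnt hu)⟩, ha, hb, hne⟩

lemma gPar_ind [Fintype V] {S : Set V} {u v : V}
    (h : gPar (gInduced E (gAnt E S)) u v) :
    hPar (hInduced (canonicalLWF E) (gAnt E S)) u v := by
  have hv : v ∈ gAnt E S := h.1.2.2
  have hg : gPar E u v := ⟨h.1.1, fun hvu => h.2 ⟨hvu, h.1.2.2, h.1.2.1⟩⟩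
  obtain ⟨e, he, ha, hb, hcl⟩ := gPar_to_edge hg
  exact ⟨e, ⟨he, hcl.trans (gCl_comp_subset_gAnt hv)⟩, ha, hb⟩

end Ant


section Moral
variable {E : Set (V × V)}

lemma mem_iff_nbr_or_par {U : Set (V × V)} {u v : V} :
    (u, v) ∈ U ↔ gNbr U u v ∨ gPar U u v := by
  constructor
  · intro h
    by_cases h' : (v, u) ∈ U
    · exact Or.inl ⟨h, h'⟩
    · exact Or.inr ⟨h, h'⟩
  · rintro (h | h) <;> exact h.1

lemma shadow_mem_iff {H : HEdges V} {u v : V} :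
    (u, v) ∈ shadow H ↔ hNbr H u v ∨ hPar H u v := by
  constructor
  · rintro ⟨h, hh, hc | hc⟩
    · exact Or.inl ⟨h, hh, hc⟩
    · exact Or.inr ⟨h, hh, hc⟩
  · rintro (⟨h, hh, hc⟩ | ⟨h, hh, hc⟩)
    · exact ⟨h, hh, Or.inl hc⟩
    · exact ⟨h, hh, Or.inr hc⟩

variable [Fintype V] {S : Set V}

lemma pair_iff {u v : V} (hne : u ≠ v) :
    (u, v) ∈ gInduced E (gAnt E S) ↔
      (u, v) ∈ shadow (hInduced (canonicalLWF E) (gAnt E S)) := by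
  rw [mem_iff_nbr_or_par, shadow_mem_iff]
  constructor
  · rintro (h | h)
    · exact Or.inl (gNbr_ind hne h)
    · exact Or.inr (gPar_ind h)
  · rintro (h | h)
    · exact Or.inl (hNbr_ind h)
    · exact Or.inr (hPar_ind h)

lemma nbr_iff {u v : V} (hne : u ≠ v) :
    gNbr (gInduced E (gAnt E S)) u v ↔
      gNbr (shadow (hInduced (canonicalLWF E) (gAnt E S))) u v := by
  unfold gNbr
  rw [← pair_iff hne, ← pair_iff (Ne.symm hne)]

lemma par_iff {u v : V} :
    gPar (gInduced E (gAnt E S)) u v ↔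
      gPar (shadow (hInduced (canonicalLWF E) (gAnt E S))) u v := by
  by_cases hne : u = v
  · subst hne
    constructor <;> intro h <;> exact absurd rfl (gPar_ne h)
  · unfold gPar
    rw [← pair_iff hne, ← pair_iff (Ne.symm hne)]

lemma comp_eq (w : V) :
    gComp (gInduced E (gAnt E S)) w
      = gComp (shadow (hInduced (canonicalLWF E) (gAnt E S))) w := by
  ext z
  exact rtg_congr_offdiag (fun a b hne => nbr_iff hne)

lemma comps_eq :
    gComps (gInduced E (gAnt E S))
      = gComps (shadow (hInduced (canonicalLWF E) (gAnt E S))) := by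
  ext T
  exact exists_congr fun v => by rw [comp_eq v]

lemma bd_eq (τ : Set V) :
    gBd (gInduced E (gAnt E S)) τ
      = gBd (shadow (hInduced (canonicalLWF E) (gAnt E S))) τ := by
  ext u
  constructor <;> rintro ⟨hu, huτ⟩ <;> refine ⟨?_, huτ⟩ <;>
    obtain ⟨v, hv, hrel⟩ := Set.mem_iUnion₂.1 hu <;>
    have hne : u ≠ v := fun h => huτ (h ▸ hv) <;>
    refine Set.mem_biUnion hv ?_
  · rcases hrel with h | h
    · exact Or.inl (par_iff.1 h)
    · exact Or.inr ((nbr_iff hne).1 h)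
  · rcases hrel with h | h
    · exact Or.inl (par_iff.2 h)
    · exact Or.inr ((nbr_iff hne).2 h)

lemma moral_iff {u v : V} (hne : u ≠ v) :
    (u, v) ∈ moral (gInduced E (gAnt E S)) ↔
      (u, v) ∈ moral (shadow (hInduced (canonicalLWF E) (gAnt E S))) := by
  unfold moral
  simp only [Set.mem_setOf_eq]
  rw [← pair_iff hne, ← pair_iff (Ne.symm hne)]
  refine or_congr Iff.rfl (or_congr Iff.rfl ?_)
  rw [← comps_eq]
  refine exists_congr fun τ => and_congr Iff.rfl ?_
  rw [← bd_eq τ]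

end Moral


section Sep
variable {U U' : Set (V × V)} {A B C : Set V}

lemma sep_aux (hsep : Separates U A B C) :
    ∀ n (f : Fin (n+1) → V), f 0 ∈ A → f (Fin.last n) ∈ B →
      (∀ i : Fin n, (f i.castSucc, f i.succ) ∈ U ∨ f i.castSucc = f i.succ) →
      ∃ i, f i ∈ C := by
  intro n
  induction n using Nat.strong_induction_on with
  | _ n ih =>
    intro f h0 hl hs
    by_cases hall : ∀ i : Fin n, (f i.castSucc, f i.succ) ∈ U
    · exact hsep n f h0 hl hall
    · push_neg at hall
      obtain ⟨j, hj⟩ := hall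
      have hjeq : f j.castSucc = f j.succ := (hs j).resolve_left hj
      cases n with
      | zero => exact j.elim0
      | succ m =>
        have hjlt : j.val < m + 1 := j.isLt
        have hidx : ∀ k : Fin (m+1),
            (if k.val ≤ j.val then k.val else k.val + 1) < m + 2 := by
          intro k
          have := k.isLt
          split <;> omega
        set g : Fin (m+1) → V :=
          fun k => f ⟨if k.val ≤ j.val then k.val else k.val + 1, hidx k⟩ with hg
        have gval : ∀ k : Fin (m+1),
            g k = f ⟨if k.val ≤ j.val then k.val else k.val + 1, hidx k⟩ :=
          fun k => rfl
        have hg0 : g 0 ∈ A := by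
          rw [gval]
          have : (⟨if (0 : Fin (m+1)).val ≤ j.val then (0 : Fin (m+1)).val
              else (0 : Fin (m+1)).val + 1, hidx 0⟩ : Fin (m+2)) = 0 := by
            apply Fin.ext
            simp only [Fin.val_zero]
            simp
          rw [this]
          exact h0
        have hgl : g (Fin.last m) ∈ B := by
          rw [gval]
          by_cases hjm : m ≤ j.val
          · have hjv : j.val = m := by omega
            have e1 : (⟨if (Fin.last m).val ≤ j.val then (Fin.last m).val
                else (Fin.last m).val + 1, hidx _⟩ : Fin (m+2)) = j.castSucc := by
              apply Fin.ext
              simp only [Fin.val_last, Fin.coe_castSucc]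
              split <;> omega
            rw [e1, hjeq]
            have e2 : j.succ = Fin.last (m+1) := by
              apply Fin.ext
              simp only [Fin.val_succ, Fin.val_last]
              omega
            rw [e2]
            exact hl
          · have e1 : (⟨if (Fin.last m).val ≤ j.val then (Fin.last m).val
                else (Fin.last m).val + 1, hidx _⟩ : Fin (m+2)) = Fin.last (m+1) := by
              apply Fin.ext
              simp only [Fin.val_last]
              split <;> omega
            rw [e1]
            exact hl
        have hgs : ∀ i : Fin m, (g i.castSucc, g i.succ) ∈ U ∨ g i.castSucc = g i.succ := by
          intro i
          have hilt : i.val < m := i.isLt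
          rw [gval, gval]
          simp only [Fin.coe_castSucc, Fin.val_succ]
          rcases Nat.lt_trichotomy i.val j.val with hlt | heq | hgt
          · have e1 : (⟨if i.val ≤ j.val then i.val else i.val + 1,
                hidx i.castSucc⟩ : Fin (m+2)) = ⟨i.val, by omega⟩ := by
              apply Fin.ext
              show (if i.val ≤ j.val then i.val else i.val + 1) = i.val
              split <;> omega
            have e2 : (⟨if i.val + 1 ≤ j.val then i.val + 1 else i.val + 1 + 1,
                hidx i.succ⟩ : Fin (m+2)) = ⟨i.val + 1, by omega⟩ := by
              apply Fin.ext
              show (if i.val + 1 ≤ j.val then i.val + 1 else i.val + 1 + 1) = i.val + 1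
              split <;> omega
            rw [e1, e2]
            exact hs ⟨i.val, by omega⟩
          · have e1 : (⟨if i.val ≤ j.val then i.val else i.val + 1,
                hidx i.castSucc⟩ : Fin (m+2)) = j.castSucc := by
              apply Fin.ext
              show (if i.val ≤ j.val then i.val else i.val + 1) = j.val
              split <;> omega
            have e2 : (⟨if i.val + 1 ≤ j.val then i.val + 1 else i.val + 1 + 1,
                hidx i.succ⟩ : Fin (m+2)) = ⟨i.val + 2, by omega⟩ := by
              apply Fin.ext
              show (if i.val + 1 ≤ j.val then i.val + 1 else i.val + 1 + 1) = i.val + 2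
              split <;> omega
            have e3 : j.succ = (⟨i.val + 1, by omega⟩ : Fin (m+2)) := by
              apply Fin.ext
              show j.val + 1 = i.val + 1
              omega
            rw [e1, hjeq, e3, e2]
            exact hs ⟨i.val + 1, by omega⟩
          · have e1 : (⟨if i.val ≤ j.val then i.val else i.val + 1,
                hidx i.castSucc⟩ : Fin (m+2)) = ⟨i.val + 1, by omega⟩ := by
              apply Fin.ext
              show (if i.val ≤ j.val then i.val else i.val + 1) = i.val + 1
              split <;> omega
            have e2 : (⟨if i.val + 1 ≤ j.val then i.val + 1 else i.val + 1 + 1,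
                hidx i.succ⟩ : Fin (m+2)) = ⟨i.val + 2, by omega⟩ := by
              apply Fin.ext
              show (if i.val + 1 ≤ j.val then i.val + 1 else i.val + 1 + 1) = i.val + 2
              split <;> omega
            rw [e1, e2]
            exact hs ⟨i.val + 1, by omega⟩
        obtain ⟨i, hi⟩ := ih m (by omega) g hg0 hgl hgs
        rw [gval] at hi
        exact ⟨_, hi⟩

lemma separates_congr_offdiag
    (h : ∀ u v : V, u ≠ v → ((u, v) ∈ U ↔ (u, v) ∈ U')) :
    Separates U A B C ↔ Separates U' A B C := by
  constructor <;> intro hsep n f h0 hl hs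
  · refine sep_aux hsep n f h0 hl ?_
    intro i
    by_cases hne : f i.castSucc = f i.succ
    · exact Or.inr hne
    · exact Or.inl ((h _ _ hne).2 (hs i))
  · refine sep_aux hsep n f h0 hl ?_
    intro i
    by_cases hne : f i.castSucc = f i.succ
    · exact Or.inr hne
    · exact Or.inl ((h _ _ hne).1 (hs i))

end Sep

end Aux

end BH

/-- A pmf is global Markovian relative to a chain graph if and only
if it is global Markovian relative to the canonical LWF DAH of the chain graph. -/
theorem statement10 {V : Type*} [Fintype V] [DecidableEq V]
    {X : V → Type*} [∀ v, Fintype (X v)]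
    (E : Set (V × V)) (hG : BH.IsChainGraph E)
    (p : (∀ v, X v) → ℝ) (hp : BH.IsPMF p) :
    BH.GlobalMarkovG E p ↔ BH.GlobalMarkovH (BH.canonicalLWF E) p := by
  have key : ∀ A B C : Set V,
      BH.Separates (BH.moral (BH.gInduced E (BH.gAnt E (A ∪ B ∪ C)))) A B C ↔
      BH.Separates (BH.moral (BH.shadow (BH.hInduced (BH.canonicalLWF E)
        (BH.hAnt (BH.canonicalLWF E) (A ∪ B ∪ C))))) A B C := by
    intro A B C
    rw [← BH.ant_eq]
    exact BH.separates_congr_offdiag (fun u v hne => BH.moral_iff hne)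
  constructor
  · intro h A B C d1 d2 d3 hsep
    exact h A B C d1 d2 d3 ((key A B C).2 hsep)
  · intro h A B C d1 d2 d3 hsep
    exact h A B C d1 d2 d3 ((key A B C).1 hsep)
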